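/- For every positive integer m ≥ 4, f(m) = ⌈2√m⌉. -/

import Mathlib

/-- The matching property: every set `A` of `m` positive integers and every real `x`
admit `r` disjoint pairs `(cᵢ, bᵢ)` with `cᵢ ∈ A` distinct, `bᵢ` distinct integers in
`(x, x + 2 * max A)`, and `cᵢ ∣ bᵢ`. -/
def MatchProp (m r : ℕ) : Prop :=
  ∀ A : Finset ℕ, A.card = m → (∀ a ∈ A, 0 < a) → ∀ x : ℝ,
    ∃ c : Fin r → ℕ, ∃ b : Fin r → ℤ,
      Function.Injective c ∧ Function.Injective b ∧
      ∀ i : Fin r, c i ∈ A ∧ (c i : ℤ) ∣ b i ∧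
        x < (b i : ℝ) ∧ (b i : ℝ) < x + 2 * (A.sup id : ℕ)

/-- `f m` is the largest `r` such that `MatchProp m r` holds. -/
noncomputable def f (m : ℕ) : ℕ := sSup {r : ℕ | MatchProp m r}


lemma crt_family (c : ℕ → ℕ) (r : ℕ → ℤ)
    (hcop : ∀ i j, i ≠ j → Nat.Coprime (c i) (c j)) :
    ∀ N : ℕ, ∃ X : ℤ, ∀ i < N, (c i : ℤ) ∣ (X - r i) := by
  intro N
  induction N with
  | zero => exact ⟨0, by omega⟩
  | succ n ih =>
    obtain ⟨X', hX'⟩ := ih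
    have hcp : Nat.Coprime (c n) (∏ i ∈ Finset.range n, c i) :=
      Nat.Coprime.prod_right (fun i hi => hcop n i (by simp at hi; omega))
    have hcpz : IsCoprime ((c n : ℤ)) ((∏ i ∈ Finset.range n, c i : ℕ) : ℤ) :=
      Nat.isCoprime_iff_coprime.mpr hcp
    obtain ⟨u, v, huv⟩ := hcpz
    set P : ℤ := ((∏ i ∈ Finset.range n, c i : ℕ) : ℤ) with hP
    refine ⟨X' + (r n - X') * (v * P), ?_⟩
    intro i hi
    rcases Nat.lt_succ_iff_lt_or_eq.mp hi with h | h
    · have hdP : (c i : ℤ) ∣ P := by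
        rw [hP]
        exact_mod_cast Int.natCast_dvd_natCast.mpr
          (Finset.dvd_prod_of_mem c (Finset.mem_range.mpr h))
      have h1 : (c i : ℤ) ∣ X' - r i := hX' i h
      have heq : X' + (r n - X') * (v * P) - r i
          = (X' - r i) + (r n - X') * v * P := by ring
      rw [heq]
      exact dvd_add h1 (Dvd.dvd.mul_left hdP _)
    · subst h
      have hv : v * P = 1 - u * (c i : ℤ) := by linarith
      exact ⟨u * (X' - r i), by rw [hv]; ring⟩

lemma moduli_coprime_aux (T C i j : ℕ) (hij : i < j)
    (hT : ∀ p : ℕ, p.Prime → p ∣ (j - i) → p ∣ T)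
    (hC : ∀ p : ℕ, p.Prime → p ∣ T → ¬ p ∣ C) :
    Nat.Coprime (C + T * i) (C + T * j) := by
  by_contra h
  obtain ⟨p, hp, hpi, hpj⟩ := Nat.Prime.not_coprime_iff_dvd.mp h
  have hd : p ∣ T * (j - i) := by
    have h1 : p ∣ (C + T * j) - (C + T * i) := Nat.dvd_sub hpj hpi
    have h2 : T * i ≤ T * j := Nat.mul_le_mul_left T (le_of_lt hij)
    have heq : C + T * j - (C + T * i) = T * j - T * i := by omega
    rwa [heq, ← Nat.mul_sub] at h1
  have hpT : p ∣ T := by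
    rcases (Nat.Prime.dvd_mul hp).mp hd with h' | h'
    · exact h'
    · exact hT p hp h'
  have hpC : p ∣ C := by
    have h3 : p ∣ T * i := hpT.mul_right i
    have := Nat.dvd_sub hpi h3
    simpa using this
  exact hC p hp hpT hpC

lemma moduli_coprime (t K i j : ℕ) (hi : i < t) (hj : j < t) (hij : i ≠ j) :
    Nat.Coprime (K * t.factorial + 1 + t.factorial * i)
      (K * t.factorial + 1 + t.factorial * j) := by
  have key : ∀ a b, a < b → b < t →
      Nat.Coprime (K * t.factorial + 1 + t.factorial * a)
        (K * t.factorial + 1 + t.factorial * b) := by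
    intro a b hab hbt
    apply moduli_coprime_aux _ _ _ _ hab
    · intro p hp hpd
      apply Nat.dvd_factorial hp.pos
      have h1 : p ≤ b - a := Nat.le_of_dvd (by omega) hpd
      omega
    · intro p hp hpT hpC
      have h4 : p ∣ K * t.factorial := hpT.mul_left K
      have h5 : p ∣ 1 := by
        have := Nat.dvd_sub hpC h4
        simpa using this
      have := Nat.le_of_dvd one_pos h5
      have := hp.one_lt
      omega
  rcases lt_or_gt_of_ne hij with h | h
  · exact key i j h hj
  · exact (key j i h hi).symm

noncomputable def wfun (x : ℝ) (a c : ℕ) : ℤ := c * ⌈(x + a) / c⌉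

/-- multiples of `c` in the open window `(x, x + 2a)` -/
noncomputable def Nset (x : ℝ) (a c : ℕ) : Finset ℤ :=
  (Finset.Icc (⌊x⌋ + 1) (⌈x + 2 * (a : ℝ)⌉ - 1)).filter (fun b => (c : ℤ) ∣ b)

lemma mem_Nset {x : ℝ} {a c : ℕ} {b : ℤ} :
    b ∈ Nset x a c ↔ (c : ℤ) ∣ b ∧ x < (b : ℝ) ∧ (b : ℝ) < x + 2 * a := by
  simp only [Nset, Finset.mem_filter, Finset.mem_Icc]
  constructor
  · rintro ⟨⟨h1, h2⟩, h3⟩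
    refine ⟨h3, ?_, ?_⟩
    · exact Int.floor_lt.mp (by omega)
    · exact Int.lt_ceil.mp (by omega)
  · rintro ⟨h3, h1, h2⟩
    refine ⟨⟨?_, ?_⟩, h3⟩
    · have := Int.floor_lt.mpr h1
      omega
    · have := Int.lt_ceil.mpr h2
      omega

lemma wfun_dvd (x : ℝ) (a c : ℕ) : (c : ℤ) ∣ wfun x a c := ⟨_, rfl⟩

lemma wfun_ge (x : ℝ) {a c : ℕ} (hc : 0 < c) : x + a ≤ (wfun x a c : ℝ) := by
  have hcr : (0:ℝ) < (c:ℝ) := by exact_mod_cast hc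
  have h1 : (x + a) / c ≤ (⌈(x + a) / c⌉ : ℝ) := Int.le_ceil _
  have h2 : (x + a) / c * c ≤ (⌈(x + a) / c⌉ : ℝ) * c :=
    mul_le_mul_of_nonneg_right h1 (le_of_lt hcr)
  rw [div_mul_cancel₀ _ (ne_of_gt hcr)] at h2
  calc x + a ≤ (⌈(x + a) / c⌉ : ℝ) * c := h2
  _ = ((wfun x a c : ℤ) : ℝ) := by rw [wfun]; push_cast; ring

lemma wfun_lt (x : ℝ) {a c : ℕ} (hc : 0 < c) : (wfun x a c : ℝ) < x + a + c := by
  have hcr : (0:ℝ) < (c:ℝ) := by exact_mod_cast hc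
  have h1 : (⌈(x + a) / c⌉ : ℝ) < (x + a) / c + 1 := Int.ceil_lt_add_one _
  have h2 : (⌈(x + a) / c⌉ : ℝ) * c < ((x + a) / c + 1) * c :=
    mul_lt_mul_of_pos_right h1 hcr
  have h3 : ((x + a) / c + 1) * c = x + a + c := by field_simp
  calc ((wfun x a c : ℤ) : ℝ) = (⌈(x + a) / c⌉ : ℝ) * c := by rw [wfun]; push_cast; ring
  _ < _ := by rw [h3] at h2; exact h2

lemma wfun_mem (x : ℝ) {a c : ℕ} (hc : 0 < c) (hca : c ≤ a) :
    wfun x a c ∈ Nset x a c := by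
  rw [mem_Nset]
  have h1 := wfun_ge x (a := a) hc
  have h2 := wfun_lt x (a := a) hc
  have har : (0:ℝ) < (a:ℝ) := by
    have : (0:ℕ) < a := lt_of_lt_of_le hc hca
    exact_mod_cast this
  have hcar : (c:ℝ) ≤ (a:ℝ) := by exact_mod_cast hca
  exact ⟨wfun_dvd x a c, by linarith, by linarith⟩

lemma vfun_ge (x : ℝ) {a c : ℕ} (hc : 0 < c) (hca : c ≤ a) :
    x ≤ ((wfun x a c - c : ℤ) : ℝ) := by
  have h1 := wfun_ge x (a := a) hc
  have hcar : (c:ℝ) ≤ (a:ℝ) := by exact_mod_cast hca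
  push_cast
  linarith

lemma vfun_lt (x : ℝ) {a c : ℕ} (hc : 0 < c) :
    ((wfun x a c - c : ℤ) : ℝ) < x + a := by
  have h2 := wfun_lt x (a := a) hc
  push_cast
  linarith

lemma vfun_mem (x : ℝ) {a c : ℕ} (hc : 0 < c) (hca : c ≤ a)
    (hv : x < ((wfun x a c - c : ℤ) : ℝ)) : wfun x a c - c ∈ Nset x a c := by
  rw [mem_Nset]
  have h2 := vfun_lt x (a := a) hc
  have har : (0:ℝ) < (a:ℝ) := by
    have : (0:ℕ) < a := lt_of_lt_of_le hc hca
    exact_mod_cast this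
  refine ⟨dvd_sub (wfun_dvd x a c) ⟨1, by ring⟩, hv, by linarith⟩

set_option maxHeartbeats 2000000 in
lemma hall_defect (m s : ℕ) (A : Finset ℕ) (hA : A.card = m) (hpos : ∀ c ∈ A, 0 < c)
    (x : ℝ) (h4 : 4 ≤ s) (hsm : s ≤ m) (hs2 : 4 * m ≤ s * s)
    (hs1 : s * s + 2 ≤ 4 * m + 2 * s)
    (F : Finset ℕ) (hFA : F ⊆ A) :
    F.card ≤ (F.biUnion (fun c => Nset x (A.sup id) c)).card + (m - s) := by
  classical
  by_contra hcon
  push_neg at hcon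
  obtain ⟨a, ha⟩ : ∃ a, a = A.sup id := ⟨_, rfl⟩
  rw [← ha] at hcon
  set NB := F.biUnion (fun c => Nset x a c) with hNB
  set k := NB.card with hk
  clear_value NB
  clear_value k
  have hcF : ∀ c ∈ F, 0 < c ∧ c ≤ a := by
    intro c hc
    exact ⟨hpos c (hFA hc), ha ▸ Finset.le_sup (f := id) (hFA hc)⟩
  have hFm : F.card ≤ m := hA ▸ Finset.card_le_card hFA
  have har : (0:ℝ) < (a:ℝ) := by
    have hFne : F.Nonempty := by
      rw [← Finset.card_pos]
      omega
    obtain ⟨c, hc⟩ := hFne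
    have h1 := hcF c hc
    have h2 : (0:ℕ) < a := by omega
    exact_mod_cast h2
  have hNBmem : ∀ b ∈ NB, x < (b:ℝ) ∧ (b:ℝ) < x + 2*a := by
    intro b hb
    rw [hNB, Finset.mem_biUnion] at hb
    obtain ⟨c, hcf, hbN⟩ := hb
    rw [mem_Nset] at hbN
    exact ⟨hbN.2.1, hbN.2.2⟩
  obtain ⟨Lc, hLc⟩ : ∃ Lc : ℤ, Lc = ⌈x + (a:ℝ)⌉ := ⟨_, rfl⟩
  have hLclt : ∀ b : ℤ, b < Lc ↔ (b:ℝ) < x + a := by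
    intro b
    rw [hLc]
    exact Int.lt_ceil
  set L' := NB.filter (fun b => b < Lc) with hL'
  set U' := NB.filter (fun b => ¬ b < Lc) with hU'
  clear_value L' U'
  set p := L'.card with hp
  set q := U'.card with hq
  clear_value p q
  have hpqk : p + q = k := by
    rw [hp, hq, hL', hU', hk]
    exact Finset.card_filter_add_card_filter_not _
  have hwmemU : ∀ c ∈ F, wfun x a c ∈ U' := by
    intro c hc
    obtain ⟨hc0, hca⟩ := hcF c hc
    rw [hU', Finset.mem_filter, hNB]
    refine ⟨Finset.mem_biUnion.mpr ⟨c, hc, wfun_mem x hc0 hca⟩, ?_⟩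
    intro hlt
    rw [hLclt] at hlt
    linarith [wfun_ge x (a := a) hc0]
  set normal := F.filter (fun c => ⌊x⌋ < wfun x a c - (c:ℤ)) with hnormal
  clear_value normal
  have hnormalF : normal ⊆ F := by rw [hnormal]; exact Finset.filter_subset _ _
  have hvx : ∀ c ∈ normal, x < ((wfun x a c - c : ℤ) : ℝ) := by
    intro c hc
    rw [hnormal, Finset.mem_filter] at hc
    have := hc.2
    push_cast
    have h2 := Int.floor_lt.mp this
    push_cast at h2
    linarith
  have hvmemL : ∀ c ∈ normal, wfun x a c - (c:ℤ) ∈ L' := by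
    intro c hc
    have hcF' : c ∈ F := hnormalF hc
    obtain ⟨hc0, hca⟩ := hcF c hcF'
    rw [hL', Finset.mem_filter, hNB]
    constructor
    · exact Finset.mem_biUnion.mpr ⟨c, hcF', vfun_mem x hc0 hca (hvx c hc)⟩
    · rw [hLclt]
      exact vfun_lt x hc0
  -- injection from normal into L' ×ˢ U'
  have hn_card : normal.card ≤ p * q := by
    have h1 : normal.card ≤ (L' ×ˢ U').card := by
      apply Finset.card_le_card_of_injOn
        (fun c => (wfun x a c - (c:ℤ), wfun x a c))
      · intro c hc
        rw [Finset.mem_coe, Finset.mem_product]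
        exact ⟨hvmemL c hc, hwmemU c (hnormalF hc)⟩
      · intro c _ c' _ hcc
        simp only [Prod.mk.injEq] at hcc
        have : (c:ℤ) = (c':ℤ) := by
          have h1 := hcc.1
          have h2 := hcc.2
          omega
        exact_mod_cast this
    rw [Finset.card_product] at h1
    rw [hp, hq]
    exact h1
  -- complement of normal in F
  have hcompl : ∀ c ∈ F, ¬ (⌊x⌋ < wfun x a c - (c:ℤ)) → c = a := by
    intro c hc hnc
    obtain ⟨hc0, hca⟩ := hcF c hc
    have h1 : ((wfun x a c - c : ℤ) : ℝ) ≤ x := by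
      push_neg at hnc
      calc ((wfun x a c - c : ℤ) : ℝ) ≤ (⌊x⌋ : ℝ) := by exact_mod_cast hnc
      _ ≤ x := Int.floor_le x
    have h2 := wfun_ge x (a := a) hc0
    have h3 : (a:ℝ) ≤ (c:ℝ) := by
      push_cast at h1
      linarith
    have : a ≤ c := by exact_mod_cast h3
    omega
  have hsplitF : F.card ≤ normal.card + 1 := by
    have h1 : (F.filter (fun c => ¬ (⌊x⌋ < wfun x a c - (c:ℤ)))).card ≤ 1 := by
      apply Finset.card_le_one.mpr
      intro c hc c' hc'
      rw [Finset.mem_filter] at hc hc'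
      rw [hcompl c hc.1 hc.2, hcompl c' hc'.1 hc'.2]
    have h2 := Finset.card_filter_add_card_filter_not
      (s := F) (p := fun c => ⌊x⌋ < wfun x a c - (c:ℤ))
    rw [← hnormal] at h2
    omega
  -- nonemptiness of both sides
  have hq1 : 1 ≤ q := by
    have hFne : F.Nonempty := by rw [← Finset.card_pos]; omega
    obtain ⟨c, hc⟩ := hFne
    have := hwmemU c hc
    rw [hq]
    exact Finset.card_pos.mpr ⟨_, this⟩
  have hp1 : 1 ≤ p := by
    have hF2 : 2 ≤ F.card := by omega
    have hnne : normal.Nonempty := by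
      rw [← Finset.card_pos]
      omega
    obtain ⟨c, hc⟩ := hnne
    have := hvmemL c hc
    rw [hp]
    exact Finset.card_pos.mpr ⟨_, this⟩
  -- key numeric inequality
  have hkey : m - s + k + 1 ≤ p * q + 1 := by omega
  have hpqs : 4 * (p * q) ≤ k * k := by
    have h1 : (4:ℤ) * (p * q) ≤ (p + q) * (p + q) := by
      have h0 : (0:ℤ) ≤ ((p:ℤ) - q)^2 := sq_nonneg _
      have hexp : ((p:ℤ) + q) * (p + q) = ((p:ℤ) - q)^2 + 4*(p*q) := by ring
      linarith
    have h2 : ((p:ℤ) + q) * (p + q) = (k:ℤ) * k := by exact_mod_cast congrArg (fun n : ℕ => (n:ℤ) * n) hpqk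
    rw [h2] at h1
    exact_mod_cast h1
  have hks : k + 1 ≤ s := by omega
  -- case k + 2 ≤ s is impossible
  have hktight : k + 1 = s := by
    by_contra hne
    have hk2 : k + 2 ≤ s := by omega
    have hk2' : 2 ≤ k := by omega
    have hcontr : False := by
      have hZ : 4 * ((m:ℤ) - s + k) ≤ (k:ℤ) * k := by
        have : (4:ℤ) * (m - s + k) ≤ 4 * (p*q) := by
          have := hkey
          have hx1 : ((m - s : ℕ) : ℤ) = (m:ℤ) - s := by
            have : s ≤ m := hsm
            push_cast [this]
            ring
          push_cast at this ⊢
          omega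
        calc (4:ℤ) * ((m:ℤ) - s + k) ≤ 4*(p*q) := this
        _ ≤ (k:ℤ)*k := by exact_mod_cast hpqs
      have hs5 : 2 * (s:ℤ) ≤ 11 := by
        have h1 : (0:ℤ) ≤ (s:ℤ) - 2 - k := by
          have : (k:ℤ) + 2 ≤ s := by exact_mod_cast hk2
          linarith
        have h2 : (0:ℤ) ≤ (s:ℤ) + k - 6 := by
          have hk2'' : (2:ℤ) ≤ (k:ℤ) := by exact_mod_cast hk2'
          have h4' : (4:ℤ) ≤ (s:ℤ) := by exact_mod_cast h4
          linarith
        have h3 : (0:ℤ) ≤ ((s:ℤ) - 2 - k) * ((s:ℤ) + k - 6) := mul_nonneg h1 h2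
        have h5 : (s:ℤ)*s + 2 ≤ 4*m + 2*s := by exact_mod_cast hs1
        have hexp : ((s:ℤ) - 2 - k)*((s:ℤ) + k - 6) = (s:ℤ)*s - 8*s + 4*k - (k:ℤ)*k + 12 := by
          ring
        linarith
      have hs5' : s ≤ 5 := by omega
      -- now k ∈ {2,3}, s ∈ {4,5}
      have hk3 : k ≤ 3 := by omega
      have hZ' : 4 * (m - s + k) ≤ k * k := by
        have hx1 : ((m - s : ℕ) : ℤ) = (m:ℤ) - s := by push_cast [hsm]; ring
        have := hZ
        rw [← hx1] at this
        exact_mod_cast this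
      interval_cases s <;> interval_cases k <;> omega
    exact hcontr
  -- tight case : k + 1 = s
  have hFcm : F.card = m := by
    have h1 : m - s + s = m := Nat.sub_add_cancel hsm
    have h2 : k + (m - s) + 1 = m := by
      rw [← hktight] at h1
      omega
    exact le_antisymm hFm (h2 ▸ Nat.succ_le_of_lt hcon)
  have hFAeq : F = A := Finset.eq_of_subset_of_card_le hFA (by omega)
  have hkk : k * k + 1 ≤ 4 * m := by
    have hsk : s = k + 1 := hktight.symm
    have h1 : s * s = k*k + 2*k + 1 := by rw [hsk]; ring
    have h2 : k*k + 2*k + 1 + 2 ≤ 4*m + 2*(k+1) := by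
      rw [← h1, ← hsk]
      exact hs1
    omega
  have hpqm : p * q = m - 1 := by omega
  have hncard : normal.card = m - 1 := by omega
  -- surjectivity of the straddle map
  have hsurj : ∀ pr ∈ L' ×ˢ U', ∃ c, ∃ _ : c ∈ normal,
      pr = (wfun x a c - (c:ℤ), wfun x a c) := by
    apply Finset.surj_on_of_inj_on_of_card_le
      (f := fun c _ => (wfun x a c - (c:ℤ), wfun x a c))
    · intro c hc
      rw [Finset.mem_product]
      exact ⟨hvmemL c hc, hwmemU c (hnormalF hc)⟩
    · intro c c' hc hc' hcc
      simp only [Prod.mk.injEq] at hcc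
      have : (c:ℤ) = (c':ℤ) := by omega
      exact_mod_cast this
    · rw [Finset.card_product, ← hp, ← hq]
      omega
  -- the exceptional element a
  have haA : a ∈ A := by
    have hAne : A.Nonempty := by rw [← Finset.card_pos]; omega
    obtain ⟨b, hb, hab⟩ := Finset.exists_mem_eq_sup A hAne id
    rw [ha, hab]
    exact hb
  have haF : a ∈ F := hFAeq ▸ haA
  have ha0 : 0 < a := (hcF a haF).1
  have hanormal : ¬ (⌊x⌋ < wfun x a a - (a:ℤ)) := by
    have h2 := Finset.card_filter_add_card_filter_not
      (s := F) (p := fun c => ⌊x⌋ < wfun x a c - (c:ℤ))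
    rw [← hnormal] at h2
    have h3 : (F.filter (fun c => ¬ (⌊x⌋ < wfun x a c - (c:ℤ)))).Nonempty := by
      rw [← Finset.card_pos]
      omega
    obtain ⟨e, he⟩ := h3
    rw [Finset.mem_filter] at he
    have hea : e = a := hcompl e he.1 he.2
    rw [hea] at he
    exact he.2
  have hb0r : (wfun x a a : ℝ) = x + a := by
    have h1 := wfun_ge x (a := a) ha0
    have h2 : wfun x a a - (a:ℤ) ≤ ⌊x⌋ := not_lt.mp hanormal
    have h3 : ((wfun x a a - a : ℤ) : ℝ) ≤ x := by
      calc ((wfun x a a - a : ℤ) : ℝ) ≤ (⌊x⌋ : ℝ) := by exact_mod_cast h2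
      _ ≤ x := Int.floor_le x
    push_cast at h3
    linarith
  have hb0U : wfun x a a ∈ U' := hwmemU a haF
  obtain ⟨b0, hb0⟩ : ∃ b0 : ℤ, b0 = wfun x a a := ⟨_, rfl⟩
  rw [← hb0] at hb0U
  rw [← hb0] at hb0r
  -- membership facts for elements of L'
  have hLmem : ∀ v ∈ L', x < (v:ℝ) ∧ (v:ℝ) < x + a := by
    intro v hv
    rw [hL', Finset.mem_filter] at hv
    exact ⟨(hNBmem v hv.1).1, (hLclt v).mp hv.2⟩
  -- the reflection map into U'
  have himgU : ∀ v ∈ L', 2*b0 - v ∈ U' := by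
    intro v hv
    obtain ⟨hv1, hv2⟩ := hLmem v hv
    obtain ⟨c, hcn, hpair⟩ := hsurj (v, b0)
      (Finset.mem_product.mpr ⟨hv, hb0U⟩)
    rw [Prod.mk.injEq] at hpair
    have hceq : (c:ℤ) = b0 - v := by omega
    obtain ⟨hc0, hca⟩ := hcF c (hnormalF hcn)
    have hcr : ((c:ℕ):ℝ) = x + a - v := by
      have : (((c:ℕ):ℤ):ℝ) = ((b0 - v : ℤ):ℝ) := by exact_mod_cast congrArg (fun z : ℤ => (z:ℝ)) hceq
      push_cast at this ⊢
      linarith [hb0r]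
    have hclta : ((c:ℕ):ℝ) < a := by linarith
    have hcpos : (0:ℝ) < ((c:ℕ):ℝ) := by exact_mod_cast hc0
    have hbw : 2*b0 - v = wfun x a c + c := by omega
    rw [hU', Finset.mem_filter, hNB]
    constructor
    · refine Finset.mem_biUnion.mpr ⟨c, hnormalF hcn, ?_⟩
      rw [hbw, mem_Nset]
      refine ⟨dvd_add (wfun_dvd x a c) dvd_rfl, ?_, ?_⟩
      · push_cast
        have := hpair.2
        have hwr : (wfun x a c : ℝ) = x + a := by rw [← hpair.2]; exact hb0r
        push_cast at hwr
        linarith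
      · have hwr : (wfun x a c : ℝ) = x + a := by rw [← hpair.2]; exact hb0r
        push_cast
        push_cast at hwr
        linarith
    · intro hlt
      rw [hLclt] at hlt
      push_cast at hlt
      linarith [hb0r]
  have himgsub : L'.image (fun v => 2*b0 - v) ⊆ U' := by
    intro b hb
    obtain ⟨v, hv, rfl⟩ := Finset.mem_image.mp hb
    exact himgU v hv
  have himgcard : (L'.image (fun v => 2*b0 - v)).card = p := by
    rw [hp]
    apply Finset.card_image_of_injOn
    intro u _ v _ huv
    simp only at huv
    omega
  have hb0img : b0 ∉ L'.image (fun v => 2*b0 - v) := by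
    intro hb
    obtain ⟨v, hv, hveq⟩ := Finset.mem_image.mp hb
    have : v = b0 := by omega
    obtain ⟨_, hv2⟩ := hLmem v hv
    rw [this] at hv2
    linarith [hb0r]
  have hqp1 : p + 1 ≤ q := by
    have h1 : insert b0 (L'.image (fun v => 2*b0 - v)) ⊆ U' := by
      intro b hb
      rcases Finset.mem_insert.mp hb with rfl | hb
      · exact hb0U
      · exact himgsub hb
    have h2 := Finset.card_le_card h1
    rw [Finset.card_insert_of_notMem hb0img, himgcard] at h2
    omega
  have hqeq : q = p + 1 := by
    have h1 : ((q:ℤ) - p)^2 ≤ 3 := by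
      have hid : (((p:ℕ):ℤ) + q)^2 - 4*((p:ℤ)*q) = ((q:ℤ)-p)^2 := by ring
      have h2 : ((p:ℤ) + q) = (k:ℤ) := by exact_mod_cast hpqk
      have h3 : ((p:ℤ) * q) = ((m:ℤ) - 1) := by
        have : ((p*q : ℕ):ℤ) = ((m - 1 : ℕ):ℤ) := by exact_mod_cast hpqm
        push_cast [show (1:ℕ) ≤ m by omega] at this
        push_cast
        linarith
      have hkkz : (k:ℤ)*k + 1 ≤ 4*m := by exact_mod_cast hkk
      have h2' : (((p:ℕ):ℤ) + q)^2 = (k:ℤ)*k := by rw [h2]; ring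
      linarith
    have h7 : (q:ℤ) - p ≥ 2 → False := by
      intro h8
      have hfact : ((q:ℤ)-p)^2 = ((q:ℤ)-p-2)*((q:ℤ)-p+2) + 4 := by ring
      have hnn : (0:ℤ) ≤ ((q:ℤ)-p-2)*((q:ℤ)-p+2) :=
        mul_nonneg (by linarith) (by linarith)
      linarith
    have h9 : (q:ℤ) ≤ p + 1 := by
      by_contra h10
      exact h7 (by omega)
    have h11 : q ≤ p + 1 := by exact_mod_cast h9
    omega
  have hU'eq : U' = insert b0 (L'.image (fun v => 2*b0 - v)) := by
    symm
    apply Finset.eq_of_subset_of_card_le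
    · intro b hb
      rcases Finset.mem_insert.mp hb with rfl | hb
      · exact hb0U
      · exact himgsub hb
    · rw [Finset.card_insert_of_notMem hb0img, himgcard]
      omega
  have hLne : L'.Nonempty := by rw [← Finset.card_pos]; omega
  obtain ⟨vmin, hvminval⟩ : ∃ vm : ℤ, vm = L'.min' hLne := ⟨_, rfl⟩
  have hvminL : vmin ∈ L' := by rw [hvminval]; exact Finset.min'_mem _ _
  obtain ⟨c1, hc1n, hc1pair⟩ := hsurj (vmin, b0)
    (Finset.mem_product.mpr ⟨hvminL, hb0U⟩)
  rw [Prod.mk.injEq] at hc1pair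
  have hc1eq : (c1:ℤ) = b0 - vmin := by omega
  obtain ⟨hc10, hc1a⟩ := hcF c1 (hnormalF hc1n)
  have h2C : (a:ℤ) ≤ 2 * c1 := by
    by_contra hlt
    push_neg at hlt
    have hb2mem : b0 + 2*(c1:ℤ) ∈ U' := by
      rw [hU', Finset.mem_filter, hNB]
      constructor
      · refine Finset.mem_biUnion.mpr ⟨c1, hnormalF hc1n, ?_⟩
        rw [mem_Nset]
        refine ⟨?_, ?_, ?_⟩
        · have hd1 : (c1:ℤ) ∣ b0 := by rw [hc1pair.2]; exact wfun_dvd x a c1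
          exact dvd_add hd1 ⟨2, by ring⟩
        · push_cast
          have hc1r : (0:ℝ) < ((c1:ℕ):ℝ) := by exact_mod_cast hc10
          push_cast at hb0r
          linarith
        · have hltr : 2*((c1:ℕ):ℝ) < (a:ℝ) := by exact_mod_cast hlt
          push_cast
          push_cast at hb0r
          linarith
      · intro h
        rw [hLclt] at h
        have hc1r : (0:ℝ) < ((c1:ℕ):ℝ) := by exact_mod_cast hc10
        push_cast at h
        linarith [hb0r]
    rw [hU'eq] at hb2mem
    rcases Finset.mem_insert.mp hb2mem with heq | hmem
    · omega
    · obtain ⟨v, hv, hveq⟩ := Finset.mem_image.mp hmem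
      have hvv : v = vmin - c1 := by omega
      have := Finset.min'_le L' v hv
      rw [← hvminval] at this
      omega
  obtain ⟨c2, hc2n, hc2pair⟩ := hsurj (vmin, 2*b0 - vmin)
    (Finset.mem_product.mpr ⟨hvminL, himgU vmin hvminL⟩)
  rw [Prod.mk.injEq] at hc2pair
  have hc2eq : (c2:ℤ) = 2*(b0 - vmin) := by omega
  obtain ⟨hc20, hc2a⟩ := hcF c2 (hnormalF hc2n)
  have hc2az : (c2:ℤ) ≤ (a:ℤ) := by exact_mod_cast hc2a
  have hc2a' : (c2:ℤ) = (a:ℤ) := by omega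
  have hc2a'' : c2 = a := by exact_mod_cast hc2a'
  rw [hnormal, Finset.mem_filter] at hc2n
  rw [hc2a''] at hc2n
  exact hanormal hc2n.2

lemma matchprop_lower (m s : ℕ) (h4 : 4 ≤ s) (hsm : s ≤ m) (hs2 : 4 * m ≤ s * s)
    (hs1 : s * s + 2 ≤ 4 * m + 2 * s) : MatchProp m s := by
  intro A hA hpos x
  classical
  obtain ⟨a, ha⟩ : ∃ a, a = A.sup id := ⟨_, rfl⟩
  -- dummy targets
  obtain ⟨D, hD⟩ : ∃ D : Finset ℤ,
      D = (Finset.range (m - s)).image (fun i : ℕ => ⌊x⌋ - 1 - i) := ⟨_, rfl⟩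
  have hDcard : D.card = m - s := by
    rw [hD, Finset.card_image_of_injOn, Finset.card_range]
    intro u _ v _ huv
    simp only at huv
    omega
  have hDlow : ∀ d ∈ D, d ≤ ⌊x⌋ := by
    intro d hd
    rw [hD] at hd
    obtain ⟨i, _, rfl⟩ := Finset.mem_image.mp hd
    omega
  have hNhigh : ∀ c : ℕ, ∀ b ∈ Nset x (A.sup id) c, ⌊x⌋ + 1 ≤ b := by
    intro c b hb
    rw [mem_Nset] at hb
    have h1 := hb.2.1
    have := Int.floor_lt.mpr h1
    omega
  have hdisj : ∀ (S : Finset ℤ), (∀ b ∈ S, ⌊x⌋ + 1 ≤ b) → Disjoint S D := by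
    intro S hS
    rw [Finset.disjoint_left]
    intro b hbS hbD
    have := hS b hbS
    have := hDlow b hbD
    omega
  -- Hall condition
  have hall : ∀ (G : Finset {c // c ∈ A}),
      G.card ≤ (G.biUnion (fun c => Nset x (A.sup id) c.val ∪ D)).card := by
    intro G
    rcases Finset.eq_empty_or_nonempty G with rfl | hGne
    · simp
    have hbieq : G.biUnion (fun c => Nset x (A.sup id) c.val ∪ D)
        = (G.biUnion (fun c => Nset x (A.sup id) c.val)) ∪ D := by
      ext b
      simp only [Finset.mem_biUnion, Finset.mem_union]
      constructor
      · rintro ⟨c, hc, hb | hb⟩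
        · exact Or.inl ⟨c, hc, hb⟩
        · exact Or.inr hb
      · rintro (⟨c, hc, hb⟩ | hb)
        · exact ⟨c, hc, Or.inl hb⟩
        · obtain ⟨c, hc⟩ := hGne
          exact ⟨c, hc, Or.inr hb⟩
    rw [hbieq]
    have hdisj2 : Disjoint (G.biUnion (fun c => Nset x (A.sup id) c.val)) D := by
      apply hdisj
      intro b hb
      rw [Finset.mem_biUnion] at hb
      obtain ⟨c, _, hb⟩ := hb
      exact hNhigh c.val b hb
    rw [Finset.card_union_of_disjoint hdisj2, hDcard]
    -- transfer to value level
    have hval : G.biUnion (fun c => Nset x (A.sup id) c.val)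
        = (G.image Subtype.val).biUnion (fun c => Nset x (A.sup id) c) := by
      rw [Finset.image_biUnion]
    have hGcard : (G.image Subtype.val).card = G.card :=
      Finset.card_image_of_injective _ Subtype.val_injective
    have hsub : (G.image Subtype.val) ⊆ A := by
      intro c hc
      obtain ⟨c', _, rfl⟩ := Finset.mem_image.mp hc
      exact c'.property
    have := hall_defect m s A hA hpos x h4 hsm hs2 hs1 (G.image Subtype.val) hsub
    rw [hGcard] at this
    rw [hval]
    exact this
  -- apply Hall's theorem
  obtain ⟨fmatch, hfinj, hfmem⟩ :=
    (Finset.all_card_le_biUnion_card_iff_exists_injective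
      (fun c : {c // c ∈ A} => Nset x (A.sup id) c.val ∪ D)).mp hall
  -- the good elements
  obtain ⟨good, hgood⟩ : ∃ g : Finset {c // c ∈ A},
      g = Finset.univ.filter (fun c => fmatch c ∉ D) := ⟨_, rfl⟩
  have hgoodmem : ∀ c ∈ good, fmatch c ∈ Nset x (A.sup id) c.val := by
    intro c hc
    rw [hgood, Finset.mem_filter] at hc
    have := hfmem c
    rw [Finset.mem_union] at this
    tauto
  have hgoodcard : s ≤ good.card := by
    have hbad : (Finset.univ.filter (fun c : {c // c ∈ A} => fmatch c ∈ D)).card ≤ m - s := by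
      rw [← hDcard]
      apply Finset.card_le_card_of_injOn fmatch
      · intro c hc
        exact (Finset.mem_filter.mp hc).2
      · intro u _ v _ huv
        exact hfinj huv
    have hsplit := Finset.card_filter_add_card_filter_not
      (s := (Finset.univ : Finset {c // c ∈ A})) (p := fun c => fmatch c ∈ D)
    have huniv : (Finset.univ : Finset {c // c ∈ A}).card = m := by
      rw [Finset.card_univ, Fintype.card_coe, hA]
    have : good.card = (Finset.univ.filter (fun c : {c // c ∈ A} => ¬ fmatch c ∈ D)).card := by
      rw [hgood]
    omega
  -- select s elements
  obtain ⟨G, hGsub, hGcard⟩ := Finset.exists_subset_card_eq hgoodcard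
  have hGA : ∀ g ∈ G, fmatch g ∈ Nset x (A.sup id) g.val :=
    fun g hg => hgoodmem g (hGsub hg)
  obtain ⟨e⟩ : Nonempty (G ≃ Fin s) := ⟨G.equivFinOfCardEq hGcard⟩
  refine ⟨fun i => ((e.symm i : {c // c ∈ A}) : ℕ),
    fun i => fmatch (e.symm i : {c // c ∈ A}), ?_, ?_, ?_⟩
  · intro i j hij
    apply e.symm.injective
    apply Subtype.ext
    apply Subtype.ext
    exact hij
  · intro i j hij
    apply e.symm.injective
    apply Subtype.ext
    exact hfinj hij
  · intro i
    have hmem := hGA (e.symm i) (e.symm i).property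
    rw [mem_Nset] at hmem
    exact ⟨((e.symm i : {c // c ∈ A})).property, hmem.1, hmem.2.1, hmem.2.2⟩

lemma not_matchprop_upper (m s : ℕ) (hm : 4 ≤ m) (h4 : 4 ≤ s) (hs : 4 * m ≤ s ^ 2) :
    ¬ MatchProp m (s + 1) := by
  intro hMP
  obtain ⟨p, q, hpq, hp2, hq2, hmt⟩ : ∃ p q : ℕ, p + q = s ∧ 2 ≤ p ∧ 2 ≤ q ∧ m ≤ p * q := by
    obtain ⟨p, hp⟩ : ∃ p, p = s / 2 := ⟨_, rfl⟩
    have hcase : s = 2 * p ∨ s = 2 * p + 1 := by omega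
    refine ⟨p, s - p, by omega, by omega, by omega, ?_⟩
    rcases hcase with h | h
    · have h2 : s ^ 2 = 4 * (p * (s - p)) := by
        have hsp : s - p = p := by omega
        rw [hsp, h]; ring
      omega
    · have h2 : s ^ 2 = 4 * (p * (s - p)) + 1 := by
        have hsp : s - p = p + 1 := by omega
        rw [hsp, h]; ring
      omega
  obtain ⟨t, ht⟩ : ∃ t, t = p * q := ⟨_, rfl⟩
  have hmt' : m ≤ t := ht ▸ hmt
  have htpos : 0 < t := by nlinarith
  have hpt : p ≤ t := by nlinarith
  obtain ⟨T, hT⟩ : ∃ T, T = t.factorial := ⟨_, rfl⟩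
  have hTpos : 0 < T := hT ▸ t.factorial_pos
  obtain ⟨C, hC⟩ : ∃ C, C = (3 * t + 1) * T + 1 := ⟨_, rfl⟩
  have hCpos : 0 < C := by omega
  -- CRT
  obtain ⟨X, hX⟩ := crt_family (fun n => if n < t then C + T * n else 1)
    (fun n => (T : ℤ) * (n % p))
    (by
      intro i j hij
      by_cases hi : i < t <;> by_cases hj : j < t <;>
        simp only [if_pos, if_neg, hi, hj, if_true, if_false]
      · have := moduli_coprime t (3 * t + 1) i j hi hj hij
        rw [hC, hT]
        convert this using 2 <;> ring
      · exact Nat.coprime_one_right _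
      · exact Nat.coprime_one_left _
      · exact Nat.coprime_one_left _) t
  have hXdvd : ∀ n < t, ((C + T * n : ℕ) : ℤ) ∣ (X - T * (n % p)) := by
    intro n hn
    have := hX n hn
    simpa only [if_pos hn] using this
  -- the set A
  obtain ⟨A, hA⟩ : ∃ A : Finset ℕ, A = (Finset.range m).image (fun n => C + T * n) := ⟨_, rfl⟩
  have hmono : StrictMono (fun n => C + T * n) := by
    intro u v huv
    have h1 : T * u < T * v := mul_lt_mul_of_pos_left huv hTpos
    simp only []
    omega
  have hcard : A.card = m := by
    rw [hA, Finset.card_image_of_injective _ hmono.injective, Finset.card_range]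
  have hpos : ∀ a ∈ A, 0 < a := by
    intro a ha
    rw [hA] at ha
    obtain ⟨n, _, rfl⟩ := Finset.mem_image.mp ha
    omega
  have hsup : A.sup id = C + T * (m - 1) := by
    apply le_antisymm
    · apply Finset.sup_le
      intro b hb
      rw [hA] at hb
      obtain ⟨n, hn, rfl⟩ := Finset.mem_image.mp hb
      simp only [Finset.mem_range] at hn
      simp only [id]
      have : T * n ≤ T * (m - 1) := Nat.mul_le_mul_left T (by omega)
      omega
    · exact Finset.le_sup (f := id)
        (by rw [hA]; exact Finset.mem_image.mpr ⟨m - 1, Finset.mem_range.mpr (by omega), rfl⟩)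
  -- the window
  obtain ⟨w, hw⟩ : ∃ w : ℝ, w = (X : ℝ) - T * ((p : ℝ) - 1) - 2 * (T * t) - 1/2 := ⟨_, rfl⟩
  obtain ⟨cf, bf, hcinj, hbinj, hcond⟩ := hMP A hcard hpos w
  -- B: possible values of bf
  obtain ⟨B, hB⟩ : ∃ B : Finset ℤ,
      B = ((Finset.range p).image fun i : ℕ => X - (T : ℤ) * i) ∪
        ((Finset.range q).image fun j : ℕ => X + C + (T : ℤ) * (p * j)) := ⟨_, rfl⟩
  have hBcard : B.card ≤ s := by
    rw [hB]
    calc _ ≤ _ + _ := Finset.card_union_le _ _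
    _ ≤ p + q := by
        gcongr <;> exact (Finset.card_image_le).trans (by simp)
    _ = s := hpq
  have hmem : ∀ k : Fin (s + 1), bf k ∈ B := by
    intro k
    obtain ⟨hcA, hdvd, hblo, hbhi⟩ := hcond k
    rw [hA] at hcA
    obtain ⟨n, hn, hcn⟩ := Finset.mem_image.mp hcA
    simp only [Finset.mem_range] at hn
    obtain ⟨i, hi⟩ : ∃ i, i = n % p := ⟨_, rfl⟩
    obtain ⟨j, hj⟩ : ∃ j, j = n / p := ⟨_, rfl⟩
    have hip : i < p := by rw [hi]; exact Nat.mod_lt n (by omega)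
    have hjq : j < q := by
      rw [hj]
      apply Nat.div_lt_of_lt_mul
      omega
    have hnij : n = i + p * j := by rw [hi, hj]; exact (Nat.mod_add_div n p).symm
    have hd1 : ((C + T * n : ℕ) : ℤ) ∣ (X - T * i) := by rw [hi]; exact hXdvd n (by omega)
    have hd2 : ((C + T * n : ℕ) : ℤ) ∣ (bf k) := by rw [hcn]; exact hdvd
    obtain ⟨d, hd⟩ : ((C + T * n : ℕ) : ℤ) ∣ (bf k - (X - T * i)) := dvd_sub hd2 hd1
    have hz : (bf k : ℤ) = X - (T:ℤ) * i + ((C:ℤ) + T * n) * d := by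
      have hcast : ((C + T * n : ℕ) : ℤ) = (C:ℤ) + T * n := by push_cast; ring
      rw [hcast] at hd
      linarith
    -- real versions
    have hbfk : (bf k : ℝ) = (X:ℝ) - T * i + ((C:ℝ) + T * n) * d := by exact_mod_cast hz
    have hsupr : ((A.sup id : ℕ) : ℝ) = (C:ℝ) + T * ((m:ℝ) - 1) := by
      rw [hsup]
      have h1 : (1:ℕ) ≤ m := by omega
      push_cast [h1]
      ring
    have hTr : (1:ℝ) ≤ (T:ℝ) := by exact_mod_cast hTpos
    have hCr : (C:ℝ) = (3 * (t:ℝ) + 1) * T + 1 := by rw [hC]; push_cast; ring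
    have hir : (i:ℝ) ≤ (p:ℝ) - 1 := by
      have : (i:ℝ) + 1 ≤ p := by exact_mod_cast hip
      linarith
    have hnr : (n:ℝ) ≤ (m:ℝ) - 1 := by
      have : (n:ℝ) + 1 ≤ m := by exact_mod_cast hn
      linarith
    have hmtr : (m:ℝ) ≤ (t:ℝ) := by exact_mod_cast hmt'
    have hptr : (p:ℝ) ≤ (t:ℝ) := by exact_mod_cast hpt
    have hTnn : (0:ℝ) ≤ (T:ℝ) := by positivity
    have hTn0 : (0:ℝ) ≤ (T:ℝ) * n := by positivity
    have hTi : (T:ℝ) * i ≤ T * ((p:ℝ) - 1) :=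
      mul_le_mul_of_nonneg_left hir hTnn
    have hTp1 : (T:ℝ) * ((p:ℝ) - 1) ≤ T * t := by
      apply mul_le_mul_of_nonneg_left _ hTnn
      linarith
    have hTm1 : (T:ℝ) * ((m:ℝ) - 1) ≤ T * t := by
      apply mul_le_mul_of_nonneg_left _ hTnn
      linarith
    have hC1 : (1:ℝ) ≤ (C:ℝ) := by exact_mod_cast hCpos
    have hCr' : (C:ℝ) = 3 * ((T:ℝ) * (t:ℝ)) + T + 1 := by rw [hC]; push_cast; ring
    have hcpos : (0:ℝ) < (C:ℝ) + T * n := by linarith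
    have hd01 : d = 0 ∨ d = 1 := by
      rcases lt_trichotomy d 0 with hdlt | hdeq | hdgt
      · exfalso
        have hdz : d ≤ (-1 : ℤ) := by omega
        have hdr : (d:ℝ) ≤ -1 := by exact_mod_cast hdz
        have hmul : ((C:ℝ) + T * n) * d ≤ ((C:ℝ) + T * n) * (-1) :=
          mul_le_mul_of_nonneg_left hdr (le_of_lt hcpos)
        have h2 : (bf k : ℝ) ≤ (X:ℝ) - T * i - ((C:ℝ) + T * n) := by linarith
        have hTi0 : (0:ℝ) ≤ (T:ℝ) * i := by positivity
        have hwgt : (bf k : ℝ) ≤ w := by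
          rw [hw]
          linarith
        linarith
      · left; exact hdeq
      · rcases eq_or_lt_of_le (by omega : (1:ℤ) ≤ d) with h1 | h1
        · right; omega
        · exfalso
          have hdz : (2:ℤ) ≤ d := by omega
          have hdr : (2:ℝ) ≤ (d:ℝ) := by exact_mod_cast hdz
          have hmul : ((C:ℝ) + T * n) * 2 ≤ ((C:ℝ) + T * n) * d :=
            mul_le_mul_of_nonneg_left hdr (le_of_lt hcpos)
          have h2 : (X:ℝ) - T * i + 2 * ((C:ℝ) + T * n) ≤ (bf k : ℝ) := by linarith
          have h3 : w + 2 * ((A.sup id : ℕ) : ℝ) ≤ (bf k : ℝ) := by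
            rw [hw, hsupr]
            linarith
          linarith
    rcases hd01 with rfl | rfl
    · have hbeq : bf k = X - (T:ℤ) * i := by rw [hz]; ring
      rw [hB]
      apply Finset.mem_union_left
      exact Finset.mem_image.mpr ⟨i, Finset.mem_range.mpr hip, hbeq.symm⟩
    · have hbeq : bf k = X + (C:ℤ) + (T:ℤ) * (p * j) := by
        rw [hz, hnij]
        push_cast
        ring
      rw [hB]
      apply Finset.mem_union_right
      exact Finset.mem_image.mpr ⟨j, Finset.mem_range.mpr hjq, hbeq.symm⟩
  -- pigeonhole
  have hfin : (Finset.univ : Finset (Fin (s+1))).card ≤ B.card := by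
    apply Finset.card_le_card_of_injOn bf (fun k _ => hmem k)
    intro u _ v _ huv
    exact hbinj huv
  simp only [Finset.card_univ, Fintype.card_fin] at hfin
  omega

lemma matchprop_mono (m : ℕ) {r r' : ℕ} (h : r' ≤ r) (H : MatchProp m r) :
    MatchProp m r' := by
  intro A hA hpos x
  obtain ⟨c, b, hc, hb, hcond⟩ := H A hA hpos x
  exact ⟨c ∘ Fin.castLE h, b ∘ Fin.castLE h,
    hc.comp (Fin.castLE_injective h), hb.comp (Fin.castLE_injective h),
    fun i => hcond _⟩

lemma sqrt_facts (m : ℕ) (hm : 4 ≤ m) :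
    4 ≤ ⌈2 * Real.sqrt m⌉₊ ∧ ⌈2 * Real.sqrt m⌉₊ ≤ m ∧
    4 * m ≤ ⌈2 * Real.sqrt m⌉₊ * ⌈2 * Real.sqrt m⌉₊ ∧
    ⌈2 * Real.sqrt m⌉₊ * ⌈2 * Real.sqrt m⌉₊ + 2 ≤ 4 * m + 2 * ⌈2 * Real.sqrt m⌉₊ := by
  have hm0 : (0:ℝ) ≤ (m:ℝ) := by positivity
  have hsq : Real.sqrt m ^ 2 = (m:ℝ) := Real.sq_sqrt hm0
  have h2 : (2:ℝ) ≤ Real.sqrt m := by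
    rw [show (2:ℝ) = Real.sqrt 4 by
      rw [show (4:ℝ) = 2^2 by norm_num, Real.sqrt_sq (by norm_num)]]
    exact Real.sqrt_le_sqrt (by exact_mod_cast hm)
  set s := ⌈2 * Real.sqrt m⌉₊ with hs
  have h4s : 4 ≤ s := by
    have h1 : (4:ℝ) ≤ 2 * Real.sqrt m := by linarith
    have := Nat.ceil_le_ceil (R := ℝ) h1
    simpa using this.trans_eq rfl
  have hsm : s ≤ m := by
    apply Nat.ceil_le.mpr
    nlinarith [Real.sqrt_nonneg (m:ℝ)]
  have hup : 4 * m ≤ s * s := by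
    have h1 : 2 * Real.sqrt m ≤ (s:ℝ) := Nat.le_ceil _
    have h3 : (4:ℝ) * m ≤ (s:ℝ) * s := by nlinarith [Real.sqrt_nonneg (m:ℝ)]
    exact_mod_cast h3
  have hlow : s * s + 2 ≤ 4 * m + 2 * s := by
    have h1 : ((s:ℕ) - 1 : ℕ) < s := by omega
    have h2' : ((s - 1 : ℕ) : ℝ) < 2 * Real.sqrt m := by
      exact_mod_cast Nat.lt_ceil.mp (by omega : (s-1 : ℕ) < ⌈2 * Real.sqrt m⌉₊)
    have h3 : (((s-1:ℕ)):ℝ) * ((s-1:ℕ):ℝ) < 4 * m := by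
      nlinarith [Real.sqrt_nonneg (m:ℝ), Nat.cast_nonneg (α := ℝ) (s-1)]
    have h4 : (s-1) * (s-1) < 4 * m := by exact_mod_cast h3
    have h5 : ∀ n : ℕ, 1 ≤ n → (n-1) * (n-1) + 2*n = n*n + 1 := by
      intro n hn
      obtain ⟨u, rfl⟩ := Nat.exists_eq_add_of_le hn
      simp only [Nat.add_sub_cancel_left]
      ring
    have h6 := h5 s (by omega)
    omega
  exact ⟨h4s, hsm, hup, hlow⟩

theorem erdos_f_eq_ge4 (m : ℕ) (hm : 4 ≤ m) :
    f m = ⌈2 * Real.sqrt m⌉₊ := by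
  obtain ⟨h4s, hsm, hs2, hs1⟩ := sqrt_facts m hm
  apply IsGreatest.csSup_eq
  constructor
  · exact matchprop_lower m _ h4s hsm hs2 hs1
  · intro r hr
    by_contra hlt
    push_neg at hlt
    exact not_matchprop_upper m _ hm h4s (by rw [pow_two]; exact hs2)
      (matchprop_mono m (by omega) hr)
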